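/- Let A be an n×n matrix over a field with columns A_1,...,A_n, let r ≥ 1, and let P = (p_{i,j}) be the (n+r-1)×r matrix with p_{n+j, j} = -1 and p_{i,j} = 0 for i > n+j, used to define columns A_{n+j} = Σ_{i=1}^{n+j-1} p_{i,j} A_i for j = 1,...,r. For any sequence 1 ≤ j_1 < j_2 < ... < j_r < n+r, let M be the n×n minor of the n×(n+r) matrix [A | A_{n+1} | ... | A_{n+r}] obtained by deleting columns j_1,...,j_r, and let Q be the r×r submatrix of P formed by rows j_1,...,j_r. Then M = (-1)^{nr + j_1 + ... + j_r + r(r-1)/2} · det Q · det A. -/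

import Mathlib

namespace Stmt15

open Equiv Equiv.Perm Matrix

variable {F : Type*} [Field F]

/-- entry of `P` as a total function on ℕ indices -/
def pc (n r : ℕ) (P : Matrix (Fin (n+r-1)) (Fin r) F) (i j : ℕ) : F :=
  if h : i < n + r - 1 ∧ j < r then P ⟨i, h.1⟩ ⟨j, h.2⟩ else 0

def gcol (n r : ℕ) (P : Matrix (Fin (n+r-1)) (Fin r) F) (i : ℕ) : Fin n → F :=
  if i < n then fun a => if (a : ℕ) = i then 1 else 0
  else fun a => ∑ k : Fin i, pc n r P k.1 (i - n) * gcol n r P k.1 a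
termination_by i
decreasing_by exact k.2

lemma gcol_lt {n r : ℕ} (P : Matrix (Fin (n+r-1)) (Fin r) F) {i : ℕ} (h : i < n) (a : Fin n) :
    gcol n r P i a = if (a : ℕ) = i then 1 else 0 := by
  rw [gcol, if_pos h]

lemma gcol_ge {n r : ℕ} (P : Matrix (Fin (n+r-1)) (Fin r) F) (j : ℕ) (a : Fin n) :
    gcol n r P (n + j) a = ∑ k : Fin (n + j), pc n r P k.1 j * gcol n r P k.1 a := by
  rw [gcol, if_neg (by omega)]
  simp

/-- the extended matrix `P̂` (with the `-1`s included), as a total function. -/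
def phat (n r : ℕ) (P : Matrix (Fin (n+r-1)) (Fin r) F) (i j : ℕ) : F :=
  if i < n + j then pc n r P i j else if i = n + j then -1 else 0

lemma phat_gt {n r : ℕ} (P : Matrix (Fin (n+r-1)) (Fin r) F) {i j : ℕ} (h : n + j < i) :
    phat n r P i j = 0 := by
  rw [phat, if_neg (by omega), if_neg (by omega)]

lemma kernel {n r : ℕ} (P : Matrix (Fin (n+r-1)) (Fin r) F) (j : ℕ) (hj : j < r)
    (a : Fin n) :
    ∑ i : Fin (n + r), phat n r P i.1 j * gcol n r P i.1 a = 0 := by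
  rw [Fin.sum_univ_eq_sum_range (fun i => phat n r P i j * gcol n r P i a)]
  rw [← Finset.sum_subset (Finset.range_subset_range.2 (show n + j + 1 ≤ n + r by omega))
    (by
      intro i _ hi
      rw [phat_gt P (by simp at hi ⊢; omega), zero_mul])]
  rw [Finset.sum_range_succ]
  have h1 : ∀ i ∈ Finset.range (n + j), phat n r P i j * gcol n r P i a
      = pc n r P i j * gcol n r P i a := by
    intro i hi
    simp only [Finset.mem_range] at hi
    rw [phat, if_pos hi]
  rw [Finset.sum_congr rfl h1, phat, if_neg (by omega), if_pos rfl]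
  rw [gcol_ge P j a, Fin.sum_univ_eq_sum_range (fun i => pc n r P i j * gcol n r P i a)]
  ring

/-! block matrices -/

def Vmat (n r : ℕ) (P : Matrix (Fin (n+r-1)) (Fin r) F) : Matrix (Fin n) (Fin r) F :=
  Matrix.of fun a j => gcol n r P (n + j.1) a

def Emat (n r : ℕ) (J : Fin r → Fin (n + r)) : Matrix (Fin r) (Fin n) F :=
  Matrix.of fun i b => if Fin.castAdd r b = J i then 1 else 0

def Dmat (n r : ℕ) (J : Fin r → Fin (n + r)) : Matrix (Fin r) (Fin r) F :=
  Matrix.of fun i j => if Fin.natAdd n j = J i then 1 else 0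

def Bmat (n r : ℕ) (P : Matrix (Fin (n+r-1)) (Fin r) F) : Matrix (Fin n) (Fin r) F :=
  Matrix.of fun a j => - phat n r P a.1 j.1

def Dmat' (n r : ℕ) (P : Matrix (Fin (n+r-1)) (Fin r) F) : Matrix (Fin r) (Fin r) F :=
  Matrix.of fun i j => - phat n r P (n + i.1) j.1

lemma detU (n r : ℕ) (P : Matrix (Fin (n+r-1)) (Fin r) F) :
    (Matrix.fromBlocks (1 : Matrix (Fin n) (Fin n) F) (Bmat n r P) 0 (Dmat' n r P)).det
      = 1 := by
  rw [Matrix.det_fromBlocks_zero₂₁, Matrix.det_one, one_mul]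
  have htri : (Dmat' n r P).BlockTriangular id := by
    intro i j hij
    show -phat n r P (n + i.1) j.1 = 0
    rw [phat_gt P (by simp only [id] at hij; rw [Fin.lt_def] at hij; omega), neg_zero]
  rw [Matrix.det_of_upperTriangular htri]
  apply Finset.prod_eq_one
  intro i _
  show -phat n r P (n + i.1) i.1 = 1
  rw [phat, if_neg (by omega), if_pos rfl]
  norm_num

lemma gcol_small {n r : ℕ} (P : Matrix (Fin (n+r-1)) (Fin r) F) (a b : Fin n) :
    gcol n r P b.1 a = (1 : Matrix (Fin n) (Fin n) F) a b := by
  rw [gcol_lt P b.2, Matrix.one_apply]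
  simp [Fin.val_inj]

lemma prodSU (n r : ℕ) (P : Matrix (Fin (n+r-1)) (Fin r) F)
    (hPdiag : ∀ j : Fin r, ∀ h : n + (j : ℕ) < n + r - 1, P ⟨n + (j : ℕ), h⟩ j = -1)
    (hP0 : ∀ (i : Fin (n+r-1)) (j : Fin r), n + (j : ℕ) < (i : ℕ) → P i j = 0)
    (J : Fin r → Fin (n + r)) (hJlt : ∀ i, (J i : ℕ) < n + r - 1) :
    Matrix.fromBlocks (1 : Matrix (Fin n) (Fin n) F) (Vmat n r P) (Emat n r J) (Dmat n r J)
      * Matrix.fromBlocks 1 (Bmat n r P) 0 (Dmat' n r P)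
    = Matrix.fromBlocks 1 0 (Emat n r J)
        (-(P.submatrix (fun i : Fin r => (⟨(J i : ℕ), hJlt i⟩ : Fin (n+r-1))) id)) := by
  rw [Matrix.fromBlocks_multiply]
  have h11 : (1 : Matrix (Fin n) (Fin n) F) * 1
      + Vmat n r P * (0 : Matrix (Fin r) (Fin n) F) = 1 := by simp
  have h21 : Emat (F := F) n r J * (1 : Matrix (Fin n) (Fin n) F)
      + Dmat (F := F) n r J * (0 : Matrix (Fin r) (Fin n) F) = Emat n r J := by simp
  have h12 : (1 : Matrix (Fin n) (Fin n) F) * Bmat n r P + Vmat n r P * Dmat' n r P = 0 := by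
    ext a j
    rw [Matrix.one_mul, Matrix.add_apply, Matrix.zero_apply, Matrix.mul_apply]
    have hker := kernel P j.1 j.2 a
    rw [Fin.sum_univ_add] at hker
    simp only [Fin.coe_castAdd, Fin.coe_natAdd] at hker
    have hfirst : ∑ b : Fin n, phat n r P b.1 j.1 * gcol n r P b.1 a
        = phat n r P a.1 j.1 := by
      rw [Finset.sum_eq_single a]
      · rw [gcol_lt P a.2, if_pos rfl, mul_one]
      · intro b _ hb
        rw [gcol_lt P b.2, if_neg (fun h => hb (Fin.ext h).symm), mul_zero]
      · intro h
        exact absurd (Finset.mem_univ a) h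
    rw [hfirst] at hker
    have hsnd : ∑ k : Fin r, Vmat n r P a k * Dmat' n r P k j
        = - ∑ k : Fin r, phat n r P (n + k.1) j.1 * gcol n r P (n + k.1) a := by
      rw [← Finset.sum_neg_distrib]
      apply Finset.sum_congr rfl
      intro k _
      show gcol n r P (n + k.1) a * (- phat n r P (n + k.1) j.1) = _
      ring
    rw [hsnd]
    show -phat n r P a.1 j.1 + _ = 0
    linear_combination -hker
  have h22 : Emat (F := F) n r J * Bmat n r P + Dmat (F := F) n r J * Dmat' n r P
      = -(P.submatrix (fun i : Fin r => (⟨(J i : ℕ), hJlt i⟩ : Fin (n+r-1))) id) := by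
    ext i j
    rw [Matrix.add_apply, Matrix.mul_apply, Matrix.mul_apply]
    have hfull : (∑ b : Fin n, Emat n r J i b * Bmat n r P b j)
        + (∑ k : Fin r, Dmat n r J i k * Dmat' n r P k j)
        = ∑ z : Fin (n + r), (if z = J i then 1 else 0) * (- phat n r P z.1 j.1) := by
      rw [← Equiv.sum_comp finSumFinEquiv
        (fun z : Fin (n + r) => (if z = J i then 1 else 0) * (- phat n r P z.1 j.1))]
      rw [Fintype.sum_sum_type]
      simp only [finSumFinEquiv_apply_left, finSumFinEquiv_apply_right]
      rfl
    rw [hfull]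
    have hpick : ∑ z : Fin (n + r), (if z = J i then 1 else 0) * (- phat n r P z.1 j.1)
        = - phat n r P (J i).1 j.1 := by
      rw [Finset.sum_eq_single (J i) (fun z _ hz => by rw [if_neg hz, zero_mul])
        (fun h => absurd (Finset.mem_univ _) h), if_pos rfl, one_mul]
    rw [hpick]
    have hphat : phat n r P (J i).1 j.1 = P ⟨(J i : ℕ), hJlt i⟩ j := by
      rcases lt_trichotomy ((J i : ℕ)) (n + j.1) with h | h | h
      · rw [phat, if_pos h, pc, dif_pos ⟨hJlt i, j.2⟩]
      · rw [phat, if_neg (by omega), if_pos h]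
        have hh : n + (j : ℕ) < n + r - 1 := by rw [← h]; exact hJlt i
        have hJi : (⟨(J i : ℕ), hJlt i⟩ : Fin (n+r-1)) = ⟨n + (j : ℕ), hh⟩ := Fin.ext h
        rw [hJi, hPdiag j hh]
      · rw [phat, if_neg (by omega), if_neg (by omega)]
        exact (hP0 ⟨(J i : ℕ), hJlt i⟩ j h).symm
    rw [hphat]
    rfl
  rw [h11, h12, h21, h22]


lemma strictMono_fin_le {k : ℕ} (f : Fin k → Fin k) (hf : StrictMono f) :
    ∀ c : Fin k, (c : ℕ) ≤ (f c : ℕ) := by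
  have key : ∀ m : ℕ, ∀ c : Fin k, c.1 = m → m ≤ (f c).1 := by
    intro m
    induction m with
    | zero => intro c _; omega
    | succ s ih =>
      intro c hc
      have hs : s < k := by omega
      have hlt : f ⟨s, hs⟩ < f c := hf (by rw [Fin.lt_def]; show s < c.1; omega)
      have h2 := ih ⟨s, hs⟩ rfl
      rw [Fin.lt_def] at hlt
      omega
  exact fun c => key c.1 c rfl

lemma strictMono_fin_id {n : ℕ} (κ : Fin n → Fin n) (hκ : StrictMono κ) (b : Fin n) :
    κ b = b := by
  have h5 := strictMono_fin_le κ hκ b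
  have hg : StrictMono (fun c : Fin n => (κ c.rev).rev) := by
    intro a b hab
    simp only [Fin.rev_lt_rev]
    exact hκ (by simpa [Fin.rev_lt_rev] using hab)
  have h4 := strictMono_fin_le _ hg b.rev
  simp only [Fin.rev_rev] at h4
  rw [Fin.val_rev, Fin.val_rev] at h4
  have := b.2
  have := (κ b).2
  apply Fin.ext
  omega

lemma tri (r : ℕ) : r * (r - 1) / 2 + r = (r + 1) * r / 2 := by
  cases r with
  | zero => rfl
  | succ s =>
    have h : (s + 1 + 1) * (s + 1) = (s + 1) * s + 2 * (s + 1) := by ring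
    rw [Nat.succ_sub_one, h, Nat.add_mul_div_left _ _ (by norm_num : 0 < 2)]

lemma sign_shuffle (n : ℕ) : ∀ (r m : ℕ) (hm : m = n + r)
    (κ : Fin n → Fin m) (J : Fin r → Fin m),
    StrictMono κ → StrictMono J → (∀ a b, κ a ≠ J b) →
    ∀ ρ : Equiv.Perm (Fin m),
    (∀ b : Fin n, ρ ⟨b.1, by omega⟩ = κ b) →
    (∀ i : Fin r, ρ ⟨n + i.1, by omega⟩ = J i) →
    Perm.sign ρ = (-1) ^ (n * r + (∑ i, (J i : ℕ)) + r * (r - 1) / 2) := by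
  intro r
  induction r with
  | zero =>
    intro m hm κ J hκ hJ hdisj ρ hρ1 hρ2
    have hm' : m = n := by omega
    subst hm'
    have hρ : ρ = 1 := by
      ext x
      have hx : (⟨x.1, by omega⟩ : Fin m) = x := Fin.ext rfl
      have h1 := hρ1 x
      rw [hx, strictMono_fin_id κ hκ] at h1
      rw [h1]
      rfl
    simp [hρ]
  | succ r IH =>
    intro m hm κ J hκ hJ hdisj ρ hρ1 hρ2
    have hm' : m = n + r + 1 := by omega
    subst hm'
    set t : Fin (n + r + 1) := J (Fin.last r) with ht
    -- the cycle moving t to the end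
    set c : Perm (Fin (n + r + 1)) :=
      Fin.revPerm.trans ((Fin.cycleRange t.rev).trans Fin.revPerm) with hc
    have hc_apply : ∀ x : Fin (n + r + 1), c x = (Fin.cycleRange t.rev x.rev).rev :=
      fun x => rfl
    have hc_val : ∀ x : Fin (n + r + 1), (c x : ℕ) =
        if x.1 < t.1 then x.1 else if x.1 = t.1 then n + r else x.1 - 1 := by
      intro x
      rcases lt_trichotomy x.1 t.1 with h | h | h
      · rw [if_pos h, hc_apply]
        have hgt : t.rev < x.rev := by
          rw [Fin.lt_def, Fin.val_rev, Fin.val_rev]; omega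
        rw [Fin.cycleRange_of_gt hgt, Fin.rev_rev]
      · rw [if_neg (by omega), if_pos h, hc_apply]
        have hx : x = t := Fin.ext h
        rw [hx, Fin.cycleRange_self, Fin.val_rev]
        simp
      · rw [if_neg (by omega), if_neg (by omega), hc_apply]
        have hlt : x.rev < t.rev := by
          rw [Fin.lt_def, Fin.val_rev, Fin.val_rev]; omega
        rw [Fin.cycleRange_of_lt hlt, Fin.val_rev]
        have hv : ((x.rev + 1 : Fin (n + r + 1)) : ℕ) = x.rev.1 + 1 := by
          rw [Fin.val_add_one_of_lt]
          exact lt_of_lt_of_le hlt (Fin.le_last _)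
        rw [hv, Fin.val_rev]
        have := x.2
        have := t.2
        omega
    have hc_sign : Perm.sign c = (-1) ^ (n + r - t.1) := by
      have hc_eq : c = Fin.revPerm * Fin.cycleRange t.rev * Fin.revPerm := rfl
      rw [hc_eq, _root_.map_mul, _root_.map_mul, Fin.sign_cycleRange]
      have h2 : Perm.sign (Fin.revPerm (n := n + r + 1)) *
          Perm.sign (Fin.revPerm (n := n + r + 1)) = 1 := Int.units_mul_self _
      calc Perm.sign Fin.revPerm * (-1) ^ (t.rev : ℕ) * Perm.sign Fin.revPerm
          = (-1) ^ (t.rev : ℕ) *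
            (Perm.sign (Fin.revPerm (n := n + r + 1)) * Perm.sign Fin.revPerm) := by
            rw [mul_comm (Perm.sign (Fin.revPerm (n := n + r + 1)))
              ((-1 : ℤˣ) ^ (t.rev : ℕ)), mul_assoc]
        _ = (-1) ^ (t.rev : ℕ) := by rw [h2, mul_one]
        _ = (-1) ^ (n + r - t.1) := by
            congr 1
            rw [Fin.val_rev]
            omega
    -- τ fixes the last element
    set τ : Perm (Fin (n + r + 1)) := ρ.trans c with hτdef
    have hτ_apply : ∀ x : Fin (n + r + 1), τ x = c (ρ x) := fun _ => rfl
    have hρlast : ρ ⟨n + r, by omega⟩ = t := by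
      have h1 := hρ2 (Fin.last r)
      simpa using h1
    have hτ_last : τ ⟨n + r, by omega⟩ = ⟨n + r, by omega⟩ := by
      apply Fin.ext
      rw [hτ_apply, hρlast, hc_val]
      simp
    have hτ_lt : ∀ x : Fin (n + r + 1), x.1 < n + r → (τ x).1 < n + r := by
      intro x hx
      have h2 : (τ x).1 < n + r + 1 := (τ x).2
      rcases Nat.lt_or_ge (τ x).1 (n + r) with h | h
      · exact h
      · exfalso
        have hxeq : τ x = ⟨n + r, by omega⟩ := Fin.ext (show (τ x).1 = n + r by omega)
        have hxx := τ.injective (hxeq.trans hτ_last.symm)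
        have : x.1 = n + r := congrArg Fin.val hxx
        omega
    have h₁ : ∀ x : Fin (n + r + 1), (x.1 < n + r) ↔ ((τ x).1 < n + r) := by
      intro x
      constructor
      · exact hτ_lt x
      · intro hτx
        by_contra hx
        have hxeq : x = ⟨n + r, by omega⟩ := Fin.ext (show x.1 = n + r by have := x.2; omega)
        rw [hxeq, hτ_last] at hτx
        simp at hτx
    let es : {y : Fin (n + r + 1) // (y : ℕ) < n + r} ≃ Fin (n + r) :=
      { toFun := fun y => ⟨y.1.1, y.2⟩
        invFun := fun y => ⟨⟨y.1, by omega⟩, y.2⟩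
        left_inv := fun y => Subtype.ext (Fin.ext rfl)
        right_inv := fun y => rfl }
    let ρ' : Perm (Fin (n + r)) := es.permCongr (τ.subtypePerm (fun x => (h₁ x).symm))
    have hρ'_val : ∀ (x : Fin (n + r)) (x' : Fin (n + r + 1)), x'.1 = x.1 →
        (ρ' x).1 = (τ x').1 := by
      intro x x' h
      have hx' : x' = ⟨x.1, by have := x.2; omega⟩ := Fin.ext h
      rw [hx']
      rfl
    have hsign1 : Perm.sign ρ' = Perm.sign τ := by
      have hA : Perm.sign ρ' = Perm.sign (τ.subtypePerm (fun x => (h₁ x).symm)) :=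
        Equiv.Perm.sign_permCongr es (τ.subtypePerm (fun x => (h₁ x).symm))
      rw [hA]
      apply Equiv.Perm.sign_subtypePerm
      intro x hne
      by_contra hx
      apply hne
      have hxeq : x = ⟨n + r, by omega⟩ :=
        Fin.ext (show x.1 = n + r by have := x.2; omega)
      rw [hxeq, hτ_last]
    -- the new strictly monotone maps
    have hκt : ∀ b, (κ b).1 ≠ t.1 := fun b h => hdisj b (Fin.last r) (Fin.ext h)
    have hJlt_t : ∀ i : Fin r, (J i.castSucc).1 < t.1 := by
      intro i
      have := hJ (Fin.castSucc_lt_last i)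
      rwa [Fin.lt_def] at this
    have hcbound : ∀ x : Fin (n + r + 1), x.1 ≠ t.1 → (c x).1 < n + r := by
      intro x hx
      have hv := hc_val x
      have := x.2
      have := t.2
      split_ifs at hv <;> omega
    let κ' : Fin n → Fin (n + r) := fun b => ⟨(c (κ b)).1, hcbound _ (hκt b)⟩
    let J' : Fin r → Fin (n + r) :=
      fun i => ⟨(c (J i.castSucc)).1, hcbound _ (by have := hJlt_t i; omega)⟩
    have hc_mono : ∀ x y : Fin (n + r + 1), x.1 ≠ t.1 → y.1 ≠ t.1 → x < y →
        (c x).1 < (c y).1 := by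
      intro x y hx hy hxy
      rw [Fin.lt_def] at hxy
      have hvx := hc_val x
      have hvy := hc_val y
      split_ifs at hvx hvy <;> omega
    have hκ'mono : StrictMono κ' := by
      intro a b hab
      rw [Fin.lt_def]
      exact hc_mono (κ a) (κ b) (hκt a) (hκt b) (hκ hab)
    have hJ'mono : StrictMono J' := by
      intro a b hab
      rw [Fin.lt_def]
      exact hc_mono _ _ (by have := hJlt_t a; omega) (by have := hJlt_t b; omega)
        (hJ (Fin.castSucc_lt_castSucc_iff.2 hab))
    have hdisj' : ∀ a b, κ' a ≠ J' b := by
      intro a b h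
      have hv := congrArg Fin.val h
      exact hdisj a b.castSucc (c.injective (Fin.ext hv))
    have hρ'1 : ∀ b : Fin n, ρ' ⟨b.1, by omega⟩ = κ' b := by
      intro b
      apply Fin.ext
      rw [hρ'_val ⟨b.1, by omega⟩ ⟨b.1, by omega⟩ rfl, hτ_apply, hρ1 b]
    have hρ'2 : ∀ i : Fin r, ρ' ⟨n + i.1, by omega⟩ = J' i := by
      intro i
      apply Fin.ext
      have h2 := hρ2 i.castSucc
      rw [hρ'_val ⟨n + i.1, by omega⟩ ⟨n + i.1, by omega⟩ rfl, hτ_apply]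
      rw [show (⟨n + i.1, by omega⟩ : Fin (n + r + 1)) = ⟨n + i.castSucc.1, by omega⟩ from
        Fin.ext rfl, h2]
    have hIH := IH (n + r) rfl κ' J' hκ'mono hJ'mono hdisj' ρ' hρ'1 hρ'2
    have hJ'val : ∀ i : Fin r, (J' i : ℕ) = ((J i.castSucc) : ℕ) := by
      intro i
      show (c (J i.castSucc)).1 = _
      rw [hc_val, if_pos (hJlt_t i)]
    have hsum : (∑ i : Fin r, (J' i : ℕ)) = ∑ i : Fin r, ((J i.castSucc) : ℕ) :=
      Finset.sum_congr rfl fun i _ => hJ'val i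
    -- combine
    have hsρ : Perm.sign ρ = Perm.sign c * Perm.sign τ := by
      have hmul : Perm.sign τ = Perm.sign c * Perm.sign ρ := by
        rw [show τ = c * ρ from rfl, _root_.map_mul]
      rw [hmul, ← mul_assoc, Int.units_mul_self, one_mul]
    rw [hsρ, hc_sign, ← hsign1, hIH, hsum]
    rw [Fin.sum_univ_castSucc (f := fun i : Fin (r + 1) => ((J i) : ℕ))]
    rw [← pow_add]
    have ht' : t.1 ≤ n + r := by have := t.2; omega
    have hexp : n * (r + 1) + ((∑ i : Fin r, ((J i.castSucc) : ℕ)) + (J (Fin.last r)).1)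
        + (r + 1) * (r + 1 - 1) / 2
        = (n + r - t.1 + (n * r + (∑ i : Fin r, ((J i.castSucc) : ℕ)) + r * (r - 1) / 2))
          + 2 * t.1 := by
      have h1 : (r + 1) * (r + 1 - 1) / 2 = r * (r - 1) / 2 + r := by
        simpa using (tri r).symm
      have h2 : n * (r + 1) = n * r + n := by ring
      rw [h1, h2, ← ht]
      generalize (∑ i : Fin r, ((J i.castSucc) : ℕ)) = s
      generalize n * r = X
      generalize r * (r - 1) / 2 = Z
      omega
    rw [hexp]
    conv_rhs => rw [pow_add, pow_mul, neg_one_sq, one_pow, mul_one]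


lemma det_aux (n r : ℕ) (P : Matrix (Fin (n+r-1)) (Fin r) F)
    (hPdiag : ∀ j : Fin r, ∀ h : n + (j : ℕ) < n + r - 1, P ⟨n + (j : ℕ), h⟩ j = -1)
    (hP0 : ∀ (i : Fin (n+r-1)) (j : Fin r), n + (j : ℕ) < (i : ℕ) → P i j = 0)
    (J : Fin r → Fin (n + r)) (hJ : StrictMono J) (hJlt : ∀ i, (J i : ℕ) < n + r - 1)
    (κ : Fin n → Fin (n + r)) (hκ : StrictMono κ) (hdisj : ∀ a b, κ a ≠ J b) :
    (Matrix.of fun a b : Fin n => gcol n r P (κ b : ℕ) a).det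
      = (-1 : F) ^ (n * r + (∑ i, ((J i : ℕ) + 1)) + r * (r - 1) / 2) *
          (P.submatrix (fun i : Fin r => (⟨(J i : ℕ), hJlt i⟩ : Fin (n+r-1))) id).det := by
  classical
  set Q : Matrix (Fin r) (Fin r) F :=
    P.submatrix (fun i : Fin r => (⟨(J i : ℕ), hJlt i⟩ : Fin (n+r-1))) id with hQ
  set S : Matrix (Fin n ⊕ Fin r) (Fin n ⊕ Fin r) F :=
    Matrix.fromBlocks 1 (Vmat n r P) (Emat n r J) (Dmat n r J) with hS
  -- determinant of S
  have hdetS : S.det = (-1 : F) ^ r * Q.det := by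
    have hmul : (S * Matrix.fromBlocks 1 (Bmat n r P) 0 (Dmat' n r P)).det
        = S.det * (Matrix.fromBlocks (1 : Matrix (Fin n) (Fin n) F) (Bmat n r P) 0
            (Dmat' n r P)).det := Matrix.det_mul _ _
    rw [hS, prodSU n r P hPdiag hP0 J hJlt, detU n r P, mul_one] at hmul
    rw [Matrix.det_fromBlocks_zero₁₂, Matrix.det_one, one_mul, Matrix.det_neg,
      Fintype.card_fin] at hmul
    rw [hS]
    exact hmul.symm
  -- the permutation
  have hbij : Function.Bijective (Sum.elim κ J) := by
    rw [Fintype.bijective_iff_injective_and_card]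
    constructor
    · intro x y hxy
      match x, y with
      | Sum.inl a, Sum.inl b => exact congrArg Sum.inl (hκ.injective hxy)
      | Sum.inl a, Sum.inr b => exact absurd hxy (hdisj a b)
      | Sum.inr a, Sum.inl b => exact absurd hxy.symm (hdisj b a)
      | Sum.inr a, Sum.inr b => exact congrArg Sum.inr (hJ.injective hxy)
    · simp
  let π : (Fin n ⊕ Fin r) ≃ Fin (n + r) := Equiv.ofBijective _ hbij
  let σ : Equiv.Perm (Fin n ⊕ Fin r) := π.trans finSumFinEquiv.symm
  have hσ : ∀ y, finSumFinEquiv (σ y) = Sum.elim κ J y := by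
    intro y
    show finSumFinEquiv (finSumFinEquiv.symm (π y)) = _
    rw [Equiv.apply_symm_apply]
    rfl
  -- the permuted matrix is block triangular
  have hS1 : ∀ (a : Fin n) (z : Fin n ⊕ Fin r),
      S (Sum.inl a) z = gcol n r P (finSumFinEquiv z : ℕ) a := by
    intro a z
    rcases z with b | j
    · show (1 : Matrix (Fin n) (Fin n) F) a b = _
      rw [finSumFinEquiv_apply_left, ← gcol_small P a b]
      rfl
    · rfl
  have hS2 : ∀ (i : Fin r) (z : Fin n ⊕ Fin r),
      S (Sum.inr i) z = if finSumFinEquiv z = J i then 1 else 0 := by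
    intro i z
    rcases z with b | j
    · rw [finSumFinEquiv_apply_left]; rfl
    · rw [finSumFinEquiv_apply_right]; rfl
  have hT : S.submatrix id σ
      = Matrix.fromBlocks (Matrix.of fun a b : Fin n => gcol n r P (κ b : ℕ) a)
          (Matrix.of fun (a : Fin n) (j : Fin r) => gcol n r P (J j : ℕ) a) 0 1 := by
    ext x y
    rcases x with a | i <;> rcases y with b | j
    · rw [Matrix.submatrix_apply, id_eq, hS1 a (σ (Sum.inl b)), hσ]
      rfl
    · rw [Matrix.submatrix_apply, id_eq, hS1 a (σ (Sum.inr j)), hσ]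
      rfl
    · rw [Matrix.submatrix_apply, id_eq, hS2 i (σ (Sum.inl b)), hσ]
      show (if κ b = J i then (1 : F) else 0) = 0
      rw [if_neg (hdisj b i)]
    · rw [Matrix.submatrix_apply, id_eq, hS2 i (σ (Sum.inr j)), hσ]
      show (if J j = J i then (1 : F) else 0) = (1 : Matrix (Fin r) (Fin r) F) i j
      rw [Matrix.one_apply]
      by_cases h : i = j
      · rw [if_pos (by rw [h]), if_pos h]
      · rw [if_neg (fun hh => h (hJ.injective hh).symm), if_neg h]
  have hdetT := Matrix.det_permute' σ S
  rw [hT, Matrix.det_fromBlocks_zero₂₁, Matrix.det_one, mul_one] at hdetT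
  -- the sign of σ
  let ρ : Equiv.Perm (Fin (n + r)) := finSumFinEquiv.permCongr σ
  have hsρ : Perm.sign ρ = Perm.sign σ := Equiv.Perm.sign_permCongr _ _
  have hρ1 : ∀ b : Fin n, ρ ⟨b.1, by omega⟩ = κ b := by
    intro b
    rw [show (⟨b.1, by omega⟩ : Fin (n + r)) = Fin.castAdd r b from Fin.ext rfl]
    show finSumFinEquiv (σ (finSumFinEquiv.symm (Fin.castAdd r b))) = κ b
    rw [finSumFinEquiv_symm_apply_castAdd, hσ]
    rfl
  have hρ2 : ∀ i : Fin r, ρ ⟨n + i.1, by omega⟩ = J i := by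
    intro i
    rw [show (⟨n + i.1, by omega⟩ : Fin (n + r)) = Fin.natAdd n i from Fin.ext rfl]
    show finSumFinEquiv (σ (finSumFinEquiv.symm (Fin.natAdd n i))) = J i
    rw [finSumFinEquiv_symm_apply_natAdd, hσ]
    rfl
  have hsign := sign_shuffle n r (n + r) rfl κ J hκ hJ hdisj ρ hρ1 hρ2
  rw [hsρ] at hsign
  -- put everything together
  rw [hdetS, hsign] at hdetT
  rw [hdetT]
  have hcast : ((((-1 : ℤˣ) ^ (n * r + (∑ i, (J i : ℕ)) + r * (r - 1) / 2) : ℤˣ) : ℤ) : F)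
      = (-1 : F) ^ (n * r + (∑ i, (J i : ℕ)) + r * (r - 1) / 2) := by
    push_cast
    norm_num
  rw [hcast, ← mul_assoc, ← pow_add]
  congr 2
  have hsum : (∑ i : Fin r, ((J i : ℕ) + 1)) = (∑ i : Fin r, (J i : ℕ)) + r := by
    rw [Finset.sum_add_distrib]
    simp
  rw [hsum]
  generalize (∑ i : Fin r, (J i : ℕ)) = s
  generalize n * r = X
  generalize r * (r - 1) / 2 = Z
  omega

lemma crel {n r : ℕ} (hr : 1 ≤ r) (A : Matrix (Fin n) (Fin n) F)
    (P : Matrix (Fin (n+r-1)) (Fin r) F)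
    (C : ℕ → Fin n → F)
    (hC1 : ∀ i : Fin n, ∀ a, C (i : ℕ) a = A a i)
    (hC2 : ∀ j : Fin r, ∀ a, C (n + (j : ℕ)) a =
      ∑ i : Fin (n + (j : ℕ)), P (Fin.castLE (Nat.le_sub_one_of_lt (Nat.add_lt_add_left j.2 n)) i) j * C (i : ℕ) a) :
    ∀ i : ℕ, i < n + r → ∀ a, C i a = ∑ b : Fin n, A a b * gcol n r P i b := by
  intro i
  induction i using Nat.strong_induction_on with
  | _ i IH =>
    intro hi a
    by_cases h : i < n
    · have h1 : C i a = A a ⟨i, h⟩ := hC1 ⟨i, h⟩ a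
      rw [h1]
      rw [Finset.sum_eq_single (⟨i, h⟩ : Fin n)
        (fun b _ hb => by
          rw [gcol_lt P h b, if_neg (fun hh => hb (Fin.ext hh)), mul_zero])
        (fun hh => absurd (Finset.mem_univ _) hh)]
      rw [gcol_lt P h, if_pos rfl, mul_one]
    · push_neg at h
      have hj : i - n < r := by omega
      have hieq : n + (i - n) = i := by omega
      have hC2' := hC2 ⟨i - n, hj⟩ a
      have hstep : ∀ k : Fin (n + (i - n)),
          P (Fin.castLE (by omega) k) ⟨i - n, hj⟩ * C k.1 a
          = pc n r P k.1 (i - n) * (∑ b : Fin n, A a b * gcol n r P k.1 b) := by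
        intro k
        have hk : k.1 < i := by have := k.2; omega
        rw [IH k.1 hk (by omega) a]
        congr 1
        rw [pc, dif_pos ⟨by have := k.2; omega, hj⟩]
        rfl
      calc C i a = C (n + (i - n)) a := by rw [hieq]
        _ = ∑ k : Fin (n + (i - n)),
              P (Fin.castLE (by omega) k) ⟨i - n, hj⟩ * C k.1 a := hC2'
        _ = ∑ k : Fin (n + (i - n)),
              pc n r P k.1 (i - n) * (∑ b : Fin n, A a b * gcol n r P k.1 b) :=
            Finset.sum_congr rfl (fun k _ => hstep k)
        _ = ∑ b : Fin n, A a b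
              * (∑ k : Fin (n + (i - n)), pc n r P k.1 (i - n) * gcol n r P k.1 b) := by
            simp_rw [Finset.mul_sum]
            rw [Finset.sum_comm]
            apply Finset.sum_congr rfl
            intro b _
            apply Finset.sum_congr rfl
            intro k _
            ring
        _ = ∑ b : Fin n, A a b * gcol n r P (n + (i - n)) b := by
            apply Finset.sum_congr rfl
            intro b _
            rw [gcol_ge]
        _ = ∑ b : Fin n, A a b * gcol n r P i b := by rw [hieq]

end Stmt15




/-- the main theorem. `C : ℕ → Fin n → F` gives the columns of the
block matrix `[A | A_{n+1} | ⋯ | A_{n+r}]`: `C i` is the `i`-th column of `A` for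
`i < n`, and `C (n+j) = Σ_{i<n+j} p_{i,j} C i`, where `P` has `-1` at (`0`-based)
entry `(n+j, j)` and `0` below. `J` enumerates (strictly monotonically) the `r`
deleted column indices, none equal to the last column, and `κ` enumerates the `n`
kept columns. Then `M = (-1)^{nr + Σ(j_i) + r(r-1)/2} · det Q · det A`, where `Q`
consists of the rows of `P` indexed by the deleted columns. -/
theorem stmt15 {F : Type*} [Field F] (n r : ℕ) (hr : 1 ≤ r)
    (A : Matrix (Fin n) (Fin n) F) (P : Matrix (Fin (n+r-1)) (Fin r) F)
    (hPdiag : ∀ j : Fin r, ∀ h : n + (j : ℕ) < n + r - 1, P ⟨n + (j : ℕ), h⟩ j = -1)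
    (hP0 : ∀ (i : Fin (n+r-1)) (j : Fin r), n + (j : ℕ) < (i : ℕ) → P i j = 0)
    (C : ℕ → Fin n → F)
    (hC1 : ∀ i : Fin n, ∀ a, C (i : ℕ) a = A a i)
    (hC2 : ∀ j : Fin r, ∀ a, C (n + (j : ℕ)) a =
      ∑ i : Fin (n + (j : ℕ)), P (Fin.castLE (by omega) i) j * C (i : ℕ) a)
    (J : Fin r → Fin (n + r)) (hJ : StrictMono J)
    (hJlt : ∀ i, (J i : ℕ) < n + r - 1)
    (κ : Fin n → Fin (n + r)) (hκ : StrictMono κ)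
    (hdisj : ∀ a b, κ a ≠ J b) :
    (Matrix.of fun a b : Fin n => C (κ b : ℕ) a).det
      = (-1 : F) ^ (n * r + (∑ i, ((J i : ℕ) + 1)) + r * (r - 1) / 2) *
          (P.submatrix (fun i : Fin r => (⟨(J i : ℕ), hJlt i⟩ : Fin (n+r-1))) id).det *
          A.det := by
  classical
  have hGκ : (Matrix.of fun a b : Fin n => C (κ b : ℕ) a)
      = A * (Matrix.of fun a b : Fin n => Stmt15.gcol n r P (κ b : ℕ) a) := by
    ext a b
    rw [Matrix.mul_apply]
    exact Stmt15.crel hr A P C hC1 hC2 (κ b).1 (κ b).2 a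
  rw [hGκ, Matrix.det_mul, Stmt15.det_aux n r P hPdiag hP0 J hJ hJlt κ hκ hdisj]
  ring
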